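/- There is no integer β ≥ 2 such that 5^β · φ(5^β) ≡ 2 (mod σ(5^β)). -/

import Mathlib

lemma four_mul_geom (n : ℕ) : 4 * (∑ k ∈ Finset.range (n + 1), 5 ^ k) + 1 = 5 ^ (n + 1) := by
  induction n with
  | zero => simp
  | succ m ih =>
    rw [Finset.sum_range_succ, Nat.mul_add]
    ring_nf
    ring_nf at ih
    omega

theorem no_pow_five_subbarao :
    ¬ ∃ β : ℕ, 2 ≤ β ∧
      5 ^ β * Nat.totient (5 ^ β) ≡ 2 [MOD ArithmeticFunction.sigma 1 (5 ^ β)] := by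
  rintro ⟨β, hβ, h⟩
  set S := ArithmeticFunction.sigma 1 (5 ^ β) with hS
  have hSsum : S = ∑ k ∈ Finset.range (β + 1), 5 ^ k := by
    rw [hS, ArithmeticFunction.sigma_one_apply_prime_pow (by norm_num)]
  have hgeom : 4 * S + 1 = 5 ^ (β + 1) := by rw [hSsum]; exact four_mul_geom β
  -- 5^(β+1) ≡ 1 [MOD S]
  have h1 : (5 : ℕ) ^ (β + 1) ≡ 1 [MOD S] := by
    rw [← hgeom]
    show (4 * S + 1) % S = 1 % S
    rw [Nat.add_comm, Nat.add_mul_mod_self_right]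
  -- totient
  have htot : Nat.totient (5 ^ β) = 4 * 5 ^ (β - 1) := by
    rw [Nat.totient_prime_pow (by norm_num) (by omega)]
    ring
  have hrw : 5 ^ β * Nat.totient (5 ^ β) = 5 ^ (β + 1) * (4 * 5 ^ (β - 2)) := by
    rw [htot]
    rw [show β - 1 = 1 + (β - 2) by omega, show β = 2 + (β - 2) by omega]
    ring_nf
  have h2 : 4 * 5 ^ (β - 2) ≡ 2 [MOD S] := by
    calc 4 * 5 ^ (β - 2) = 1 * (4 * 5 ^ (β - 2)) := by ring
    _ ≡ 5 ^ (β + 1) * (4 * 5 ^ (β - 2)) [MOD S] := (h1.symm).mul_right _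
    _ = 5 ^ β * Nat.totient (5 ^ β) := hrw.symm
    _ ≡ 2 [MOD S] := h
  -- bounds
  have hlt : 4 * 5 ^ (β - 2) < S := by
    have : 5 ^ β ≤ S := by
      rw [hSsum]
      exact Finset.single_le_sum (f := fun k => 5 ^ k) (fun _ _ => Nat.zero_le _)
        (Finset.self_mem_range_succ β)
    have hb : 5 ^ β = 25 * 5 ^ (β - 2) := by
      rw [show β = 2 + (β - 2) by omega]; simp; ring
    have hp : 0 < 5 ^ (β - 2) := Nat.pow_pos (by norm_num)
    omega
  have h2lt : 2 < S := by
    have hp : 0 < 5 ^ (β - 2) := Nat.pow_pos (by norm_num)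
    omega
  have := h2
  rw [Nat.ModEq, Nat.mod_eq_of_lt hlt, Nat.mod_eq_of_lt h2lt] at this
  have hp : 0 < 5 ^ (β - 2) := Nat.pow_pos (by norm_num)
  omega
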